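/- If f : ℝ → ℂ is almost automorphic and f(x) → 0 as x → +∞, then f is identically zero. -/
import Mathlib


open Filter MeasureTheory

/-- A continuous function `f : ℝ → ℂ` is almost automorphic if for every sequence of reals
there is a subsequence along which the translates converge pointwise to some `g`, and the
back-translates of `g` converge pointwise to `f`. -/
def AlmostAutomorphic (f : ℝ → ℂ) : Prop :=
  Continuous f ∧ ∀ s : ℕ → ℝ, ∃ σ : ℕ → ℕ, StrictMono σ ∧ ∃ g : ℝ → ℂ,
    (∀ x : ℝ, Tendsto (fun k => f (x + s (σ k))) atTop (nhds (g x))) ∧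
    (∀ x : ℝ, Tendsto (fun k => g (x - s (σ k))) atTop (nhds (f x)))

/-- If an almost automorphic function tends to zero at plus infinity, it vanishes identically. -/
theorem almostAutomorphic_eq_zero_of_tendsto_zero (f : ℝ → ℂ)
    (hf : AlmostAutomorphic f)
    (h0 : Tendsto f atTop (nhds 0)) :
    ∀ x : ℝ, f x = 0 := by
  obtain ⟨-, hAA⟩ := hf
  obtain ⟨σ, hσ, g, hg1, hg2⟩ := hAA (fun n => (n : ℝ))
  -- g = 0
  have hg0 : ∀ x : ℝ, g x = 0 := by
    intro x
    have ht : Tendsto (fun k => x + ((σ k : ℕ) : ℝ)) atTop atTop := by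
      apply tendsto_atTop_add_const_left
      exact tendsto_natCast_atTop_atTop.comp hσ.tendsto_atTop
    have := h0.comp ht
    exact tendsto_nhds_unique (hg1 x) this
  intro x
  have : Tendsto (fun k : ℕ => (0 : ℂ)) atTop (nhds (f x)) := by
    have := hg2 x
    simpa [hg0] using this
  exact (tendsto_nhds_unique tendsto_const_nhds this).symm
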